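/- The value of a maximum fractional packing of odd \(T\)-walks in \((G, T, cap)\) equals the value of a maximum fractional multiflow in the symmetrized network \((\widetilde{G}, \widetilde{T}, \widetilde{cap})\) with commodity graph \(H_T\). -/

import Mathlib

/-- The bipartite double cover `G̃` of `G`. -/
def doubleCover {V : Type*} (G : SimpleGraph V) : SimpleGraph (V ⊕ V) where
  Adj a b := ∃ u v, G.Adj u v ∧
    ((a = Sum.inl u ∧ b = Sum.inr v) ∨ (a = Sum.inr u ∧ b = Sum.inl v))
  symm := by
    constructor
    rintro a b ⟨u, v, h, (⟨rfl, rfl⟩ | ⟨rfl, rfl⟩)⟩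
    · exact ⟨v, u, h.symm, Or.inr ⟨rfl, rfl⟩⟩
    · exact ⟨v, u, h.symm, Or.inl ⟨rfl, rfl⟩⟩
  loopless := by
    constructor
    rintro a ⟨u, v, h, (⟨rfl, h2⟩ | ⟨rfl, h2⟩)⟩ <;> simp at h2

/-- Capacities on the double cover: each of the two copies of edge `uv` gets `½ cap(uv)`. -/
noncomputable def capTilde {V : Type*} (cap : Sym2 V → ℝ) (e : Sym2 (V ⊕ V)) : ℝ :=
  cap (Sym2.map (Sum.elim id id) e) / 2

/-- `r` is the value of some fractional packing of odd `T`-walks in `(G, T, cap)`. -/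
def IsOddTWalkPackingValue {V : Type*} [DecidableEq V] (G : SimpleGraph V)
    (T : Set V) (cap : Sym2 V → ℝ) (r : ℝ) : Prop :=
  ∃ (m : ℕ) (α : Fin m → ℝ) (x y : Fin m → V) (W : ∀ i, G.Walk (x i) (y i)),
    (∀ i, 0 ≤ α i) ∧
    (∀ i, x i ∈ T ∧ y i ∈ T ∧ x i ≠ y i) ∧
    (∀ i, Odd (W i).length) ∧
    (∀ e ∈ G.edgeSet, ∑ i, α i * ((W i).edges.count e : ℝ) ≤ cap e) ∧
    r = ∑ i, α i

/-- `r` is the value of some fractional multiflow in `(G̃, T̃, c̃ap)` with commodity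
graph `H_T` (walks joining `t₁` to `t₂'` for distinct terminals `t₁, t₂`). -/
def IsMultiflowValue {V : Type*} [DecidableEq V] (G : SimpleGraph V)
    (T : Set V) (cap : Sym2 V → ℝ) (r : ℝ) : Prop :=
  ∃ (m : ℕ) (α : Fin m → ℝ) (x y : Fin m → V)
    (W : ∀ i, (doubleCover G).Walk (Sum.inl (x i)) (Sum.inr (y i))),
    (∀ i, 0 ≤ α i) ∧
    (∀ i, x i ∈ T ∧ y i ∈ T ∧ x i ≠ y i) ∧
    (∀ e ∈ (doubleCover G).edgeSet,
      ∑ i, α i * ((W i).edges.count e : ℝ) ≤ capTilde cap e) ∧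
    r = ∑ i, α i

section Aux

open SimpleGraph

variable {V : Type*} [DecidableEq V] (G : SimpleGraph V)

/-- The projection homomorphism from the double cover to `G`. -/
def dcProj : doubleCover G →g G where
  toFun := Sum.elim id id
  map_rel' := by
    rintro a b ⟨u, v, h, (⟨rfl, rfl⟩ | ⟨rfl, rfl⟩)⟩ <;> simpa using h

/-- The swap automorphism of the double cover. -/
def dcSwap : doubleCover G →g doubleCover G where
  toFun := Sum.swap
  map_rel' := by
    rintro a b ⟨u, v, h, (⟨rfl, rfl⟩ | ⟨rfl, rfl⟩)⟩
    · exact ⟨u, v, h, Or.inr ⟨rfl, rfl⟩⟩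
    · exact ⟨u, v, h, Or.inl ⟨rfl, rfl⟩⟩

lemma count_swap_edges {s t : V ⊕ V} (W : (doubleCover G).Walk s t) (e : Sym2 (V ⊕ V)) :
    ((W.map (dcSwap G)).edges).count e = W.edges.count (Sym2.map Sum.swap e) := by
  rw [Walk.edges_map]
  have hinj : Function.Injective (Sym2.map (@Sum.swap V V)) :=
    Sym2.map.injective fun x y hxy => by rw [← Sum.swap_swap x, hxy, Sum.swap_swap]
  have h1 : e = Sym2.map Sum.swap (Sym2.map Sum.swap e) := by
    rw [Sym2.map_map]
    simp [Function.comp_def]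
  have h2 : Sym2.map (⇑(dcSwap G)) = Sym2.map (@Sum.swap V V) := rfl
  rw [h2]
  conv_lhs => rw [h1]
  exact List.count_map_of_injective _ _ hinj _

lemma dc_parity {s t : V ⊕ V} (W : (doubleCover G).Walk s t) :
    Even W.length ↔ (s.isLeft = t.isLeft) := by
  induction W with
  | nil => simp
  | @cons a b c h p ih =>
    obtain ⟨u, v, _, (⟨rfl, rfl⟩ | ⟨rfl, rfl⟩)⟩ := id h <;>
      · rw [Walk.length_cons, Nat.even_add_one, ih]
        cases hc : c.isLeft <;> simp

lemma indicator_aux {u v a b : V} (hab : a ≠ b) (huv : u ≠ v) :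
    ((if (s(u, v) : Sym2 V) = s(a, b) then 1 else 0) : ℕ)
      = (if (s(Sum.inl u, Sum.inr v) : Sym2 (V ⊕ V)) = s(Sum.inl a, Sum.inr b) then 1 else 0)
        + (if (s(Sum.inl u, Sum.inr v) : Sym2 (V ⊕ V)) = s(Sum.inr a, Sum.inl b) then 1 else 0) := by
  simp only [Sym2.eq_iff, Sum.inl.injEq, Sum.inr.injEq, reduceCtorEq, false_and, and_false,
    or_false, false_or]
  by_cases hP : u = a ∧ v = b <;> by_cases hQ : u = b ∧ v = a
  · exact absurd (hP.1.symm.trans hQ.1) hab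
  all_goals simp [hP, hQ]
  all_goals (intro h h2; first | exact hab h | exact hab h2)

lemma count_proj_edges {s t : V ⊕ V} (W : (doubleCover G).Walk s t) {a b : V} (hab : a ≠ b) :
    ((W.map (dcProj G)).edges).count s(a, b)
      = W.edges.count s(Sum.inl a, Sum.inr b) + W.edges.count s(Sum.inr a, Sum.inl b) := by
  induction W with
  | nil => simp
  | @cons c d t h p ih =>
    obtain ⟨u, v, huv, (⟨rfl, rfl⟩ | ⟨rfl, rfl⟩)⟩ := id h
    · have key := indicator_aux (a := a) (b := b) hab huv.ne
      simp only [Walk.map_cons, Walk.edges_cons, List.count_cons, ih, beq_iff_eq]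
      have hmap : s(((dcProj G) (Sum.inl u)), ((dcProj G) (Sum.inr v))) = s(u, v) := rfl
      rw [hmap]
      omega
    · simp only [Walk.map_cons, Walk.edges_cons, List.count_cons, ih, beq_iff_eq]
      have hmap : s(((dcProj G) (Sum.inr u)), ((dcProj G) (Sum.inl v))) = s(v, u) :=
        Sym2.eq_swap
      have e3 : (s(Sum.inr u, Sum.inl v) : Sym2 (V ⊕ V)) = s(Sum.inl v, Sum.inr u) :=
        Sym2.eq_swap
      rw [hmap, e3]
      have key := indicator_aux (a := a) (b := b) hab huv.ne.symm
      omega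

/-- The count condition relating a walk in the double cover to a walk in `G`. -/
def Cnt {s t : V ⊕ V} {p q : V} (W : (doubleCover G).Walk s t) (w : G.Walk p q) : Prop :=
  ∀ a b : V, a ≠ b →
    W.edges.count s(Sum.inl a, Sum.inr b) + W.edges.count s(Sum.inr a, Sum.inl b)
      = w.edges.count s(a, b)

lemma dcAdj_inl {u v : V} (h : G.Adj u v) : (doubleCover G).Adj (Sum.inl u) (Sum.inr v) :=
  ⟨u, v, h, Or.inl ⟨rfl, rfl⟩⟩

lemma lift_exists {u v : V} (w : G.Walk u v) :
    (Even w.length → ∃ W : (doubleCover G).Walk (Sum.inl u) (Sum.inl v), Cnt G W w) ∧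
    (Odd w.length → ∃ W : (doubleCover G).Walk (Sum.inl u) (Sum.inr v), Cnt G W w) := by
  induction w with
  | nil =>
    refine ⟨fun _ => ⟨Walk.nil, ?_⟩, fun h => absurd h (by simp)⟩
    intro a b hab
    simp [Cnt]
  | @cons c d e h p ih =>
    obtain ⟨ihE, ihO⟩ := ih
    constructor
    · intro he
      rw [Walk.length_cons, Nat.even_add_one] at he
      obtain ⟨W, hW⟩ := ihO (Nat.not_even_iff_odd.mp he)
      refine ⟨Walk.cons (dcAdj_inl G h) (W.map (dcSwap G)), ?_⟩
      intro a b hab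
      have h1 := hW a b hab
      have key := indicator_aux hab h.ne
      show List.count _ (s(Sum.inl c, Sum.inr d) :: (W.map (dcSwap G)).edges)
        + List.count _ (s(Sum.inl c, Sum.inr d) :: (W.map (dcSwap G)).edges) = _
      simp only [Walk.edges_cons, List.count_cons, count_swap_edges, Sym2.map_pair_eq,
        Sum.swap_inl, Sum.swap_inr, beq_iff_eq]
      omega
    · intro ho
      rw [Walk.length_cons, Nat.odd_add_one] at ho
      obtain ⟨W, hW⟩ := ihE (Nat.not_odd_iff_even.mp ho)
      refine ⟨Walk.cons (dcAdj_inl G h) (W.map (dcSwap G)), ?_⟩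
      intro a b hab
      have h1 := hW a b hab
      have key := indicator_aux hab h.ne
      show List.count _ (s(Sum.inl c, Sum.inr d) :: (W.map (dcSwap G)).edges)
        + List.count _ (s(Sum.inl c, Sum.inr d) :: (W.map (dcSwap G)).edges) = _
      simp only [Walk.edges_cons, List.count_cons, count_swap_edges, Sym2.map_pair_eq,
        Sum.swap_inl, Sum.swap_inr, beq_iff_eq]
      omega

lemma cover_edge_form {e : Sym2 (V ⊕ V)} (he : e ∈ (doubleCover G).edgeSet) :
    ∃ u v, G.Adj u v ∧ e = s(Sum.inl u, Sum.inr v) := by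
  induction e using Sym2.ind with
  | _ a b =>
    rw [SimpleGraph.mem_edgeSet] at he
    obtain ⟨u, v, huv, (⟨rfl, rfl⟩ | ⟨rfl, rfl⟩)⟩ := he
    · exact ⟨u, v, huv, rfl⟩
    · exact ⟨v, u, huv.symm, Sym2.eq_swap⟩

end Aux

/-- Packing the two half-weight lifts of each odd walk. -/
def WWaux {V : Type*} [DecidableEq V] (G : SimpleGraph V) {m : ℕ} (x y : Fin m → V)
    (Wl : ∀ j, (doubleCover G).Walk (Sum.inl (x j)) (Sum.inr (y j))) :
    ∀ s : Fin m ⊕ Fin m,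
      (doubleCover G).Walk (Sum.inl (Sum.elim x y s)) (Sum.inr (Sum.elim y x s))
  | Sum.inl j => Wl j
  | Sum.inr j => ((Wl j).reverse).map (dcSwap G)

open SimpleGraph

/-- The maximum value of a fractional packing of odd `T`-walks in `(G, T, cap)` equals
the maximum value of a fractional multiflow in `(G̃, T̃, c̃ap)` with commodity graph `H_T`. -/
theorem stmt9 {V : Type*} [Fintype V] [DecidableEq V] (G : SimpleGraph V)
    (T : Set V) (cap : Sym2 V → ℝ) (hcap : ∀ e, 0 ≤ cap e) :
    sSup {r | IsOddTWalkPackingValue G T cap r} =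
      sSup {r | IsMultiflowValue G T cap r} := by
  have hset : {r | IsOddTWalkPackingValue G T cap r} = {r | IsMultiflowValue G T cap r} := by
    ext r
    simp only [Set.mem_setOf_eq]
    constructor
    · rintro ⟨m, α, x, y, W, hα, hT, hodd, hcon, hval⟩
      choose Wl hWl using fun i => (lift_exists G (W i)).2 (hodd i)
      refine ⟨m + m,
        fun i => Sum.elim (fun j => α j / 2) (fun j => α j / 2) (finSumFinEquiv.symm i),
        fun i => Sum.elim x y (finSumFinEquiv.symm i),
        fun i => Sum.elim y x (finSumFinEquiv.symm i),
        fun i => WWaux G x y Wl (finSumFinEquiv.symm i),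
        ?_, ?_, ?_, ?_⟩
      · intro i
        beta_reduce
        rcases hs : finSumFinEquiv.symm i with j | j <;>
          · simp only [Sum.elim_inl, Sum.elim_inr]
            linarith [hα j]
      · intro i
        beta_reduce
        rcases hs : finSumFinEquiv.symm i with j | j
        · simp only [Sum.elim_inl, Sum.elim_inr]
          exact ⟨(hT j).1, (hT j).2.1, (hT j).2.2⟩
        · simp only [Sum.elim_inl, Sum.elim_inr]
          exact ⟨(hT j).2.1, (hT j).1, (hT j).2.2.symm⟩
      · intro e he
        obtain ⟨u, v, huv, rfl⟩ := cover_edge_form G he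
        refine le_trans (le_of_eq
          ((Fintype.sum_equiv finSumFinEquiv
            (fun s => (Sum.elim (fun j => α j / 2) (fun j => α j / 2) s) *
              ((WWaux G x y Wl s).edges.count s(Sum.inl u, Sum.inr v) : ℝ))
            _ (fun s => by beta_reduce; rw [Equiv.symm_apply_apply])).symm)) ?_
        rw [Fintype.sum_sum_type]
        simp only [Sum.elim_inl, Sum.elim_inr]
        have hc2 : ∀ j, ((WWaux G x y Wl (Sum.inr j)).edges.count s(Sum.inl u, Sum.inr v))
            = (Wl j).edges.count s(Sum.inr u, Sum.inl v) := by
          intro j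
          show ((((Wl j).reverse).map (dcSwap G)).edges.count _) = _
          rw [count_swap_edges, Sym2.map_pair_eq, Sum.swap_inl, Sum.swap_inr,
            Walk.edges_reverse, List.count_reverse]
        have hcomb : ∀ j : Fin m,
            α j / 2 * (((WWaux G x y Wl (Sum.inl j)).edges.count s(Sum.inl u, Sum.inr v)) : ℝ)
              + α j / 2 * (((WWaux G x y Wl (Sum.inr j)).edges.count s(Sum.inl u, Sum.inr v)) : ℝ)
            = α j * (((W j).edges.count s(u, v)) : ℝ) / 2 := by
          intro j
          have hkey := hWl j u v huv.ne
          have h1 : (WWaux G x y Wl (Sum.inl j)).edges.count s(Sum.inl u, Sum.inr v)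
              = (Wl j).edges.count s(Sum.inl u, Sum.inr v) := rfl
          rw [h1, hc2 j]
          have hcast : ((Wl j).edges.count s(Sum.inl u, Sum.inr v) : ℝ)
              + ((Wl j).edges.count s(Sum.inr u, Sum.inl v) : ℝ)
              = (((W j).edges.count s(u, v)) : ℝ) := by exact_mod_cast hkey
          rw [← hcast]
          ring
        rw [← Finset.sum_add_distrib]
        have hct : capTilde cap s(Sum.inl u, Sum.inr v) = cap s(u, v) / 2 := by
          simp [capTilde, Sym2.map_pair_eq]
        rw [hct]
        refine le_of_eq_of_le (Finset.sum_congr rfl (fun j _ => hcomb j)) ?_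
        have hcap' := hcon s(u, v) (G.mem_edgeSet.mpr huv)
        rw [← Finset.sum_div]
        linarith
      · rw [hval]
        rw [(Fintype.sum_equiv finSumFinEquiv
          (fun s => Sum.elim (fun j => α j / 2) (fun j => α j / 2) s)
          _ (fun s => by beta_reduce; rw [Equiv.symm_apply_apply])).symm]
        rw [Fintype.sum_sum_type]
        simp only [Sum.elim_inl, Sum.elim_inr]
        rw [← Finset.sum_add_distrib]
        exact Finset.sum_congr rfl (fun j _ => by ring)
    · rintro ⟨m, α, x, y, W, hα, hT, hcon, hval⟩
      refine ⟨m, α, x, y, fun i => (W i).map (dcProj G), hα, hT, ?_, ?_, hval⟩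
      · intro i
        change Odd ((W i).map (dcProj G)).length
        rw [Walk.length_map]
        exact Nat.not_even_iff_odd.mp (fun hE => by simpa using (dc_parity G (W i)).mp hE)
      · intro e he
        induction e using Sym2.ind with
        | _ u v =>
          have huv : G.Adj u v := G.mem_edgeSet.mp he
          have h1 := hcon s(Sum.inl u, Sum.inr v)
            ((doubleCover G).mem_edgeSet.mpr ⟨u, v, huv, Or.inl ⟨rfl, rfl⟩⟩)
          have h2 := hcon s(Sum.inr u, Sum.inl v)
            ((doubleCover G).mem_edgeSet.mpr ⟨u, v, huv, Or.inr ⟨rfl, rfl⟩⟩)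
          have hct1 : capTilde cap s(Sum.inl u, Sum.inr v) = cap s(u, v) / 2 := by
            simp [capTilde, Sym2.map_pair_eq]
          have hct2 : capTilde cap s(Sum.inr u, Sum.inl v) = cap s(u, v) / 2 := by
            simp [capTilde, Sym2.map_pair_eq]
          rw [hct1] at h1
          rw [hct2] at h2
          have hsplit : ∀ i, α i * ((((W i).map (dcProj G)).edges.count s(u, v)) : ℝ)
              = α i * (((W i).edges.count s(Sum.inl u, Sum.inr v)) : ℝ)
                + α i * (((W i).edges.count s(Sum.inr u, Sum.inl v)) : ℝ) := by
            intro i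
            rw [count_proj_edges G (W i) huv.ne]
            push_cast
            ring
          refine le_of_eq_of_le (Finset.sum_congr rfl (fun i _ => hsplit i)) ?_
          rw [Finset.sum_add_distrib]
          linarith
  rw [hset]
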